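/- Fix N ≥ 1, constants α_a, β_a ∈ ℝ, functions φ_{a,1}, φ_{a,2} : ℝ² → ℝ, and functions τ_{ab} : ℝ⁴ → ℝ for a ≠ b. With π the skew-symmetric matrix-valued map on ℝ^{3N} with entries π_{I_a R_a} = −α_a·I_a + β_a·S_a·I_a + φ_{a,2}(S_a,I_a), π_{S_a R_a} = −β_a·S_a·I_a + φ_{a,1}(S_a,I_a), π_{S_a I_a} = 0, π_{R_a R_b} = −τ_{ab}(S_a,I_a,S_b,I_b), all other independent entries zero, and Hamiltonian H = ∑_{k=1}^N (S_k + I_k + R_k), the vector field π·∇H has components (π·∇H)_{S_a} = −β_a·S_a·I_a + φ_{a,1}(S_a,I_a), (π·∇H)_{I_a} = β_a·S_a·I_a − α_a·I_a + φ_{a,2}(S_a,I_a), (π·∇H)_{R_a} = α_a·I_a − φ_{a,1}(S_a,I_a) − φ_{a,2}(S_a,I_a) − ∑_{k≠a} τ_{ak}(S_a,I_a,S_k,I_k). -/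
import Mathlib


/-- The Poisson structure of `N` interacting generalized SIR populations, on `ℝ^{3N}` with
coordinates `(S_a, I_a, R_a) = (x (a,0), x (a,1), x (a,2))`:
`π_{S_a I_a} = 0`, `π_{S_a R_a} = −β_a·S_a·I_a + φ_{a,1}(S_a,I_a)`,
`π_{I_a R_a} = −α_a·I_a + β_a·S_a·I_a + φ_{a,2}(S_a,I_a)`,
`π_{R_a R_b} = −τ_{ab}(S_a,I_a,S_b,I_b)` for `a ≠ b`, all other independent entries zero. -/
noncomputable def intSirPoisson (N : ℕ) (α β : Fin N → ℝ)
    (φ₁ φ₂ : Fin N → ℝ × ℝ → ℝ) (τ : Fin N → Fin N → ℝ × ℝ × ℝ × ℝ → ℝ)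
    (x : Fin N × Fin 3 → ℝ) : Matrix (Fin N × Fin 3) (Fin N × Fin 3) ℝ :=
  fun p q =>
    if p.1 = q.1 then
      if p.2 = 0 ∧ q.2 = 2 then
        -β p.1 * x (p.1, 0) * x (p.1, 1) + φ₁ p.1 (x (p.1, 0), x (p.1, 1))
      else if p.2 = 2 ∧ q.2 = 0 then
        -(-β p.1 * x (p.1, 0) * x (p.1, 1) + φ₁ p.1 (x (p.1, 0), x (p.1, 1)))
      else if p.2 = 1 ∧ q.2 = 2 then
        -α p.1 * x (p.1, 1) + β p.1 * x (p.1, 0) * x (p.1, 1) + φ₂ p.1 (x (p.1, 0), x (p.1, 1))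
      else if p.2 = 2 ∧ q.2 = 1 then
        -(-α p.1 * x (p.1, 1) + β p.1 * x (p.1, 0) * x (p.1, 1) + φ₂ p.1 (x (p.1, 0), x (p.1, 1)))
      else 0
    else
      if p.2 = 2 ∧ q.2 = 2 then
        -τ p.1 q.1 (x (p.1, 0), x (p.1, 1), x (q.1, 0), x (q.1, 1))
      else 0

/-- The Hamiltonian vector field `π(x)·∇H(x)` of a matrix-valued map `P` and Hamiltonian `H`. -/
noncomputable def hamVF {n : Type*} [Fintype n] [DecidableEq n]
    (P : (n → ℝ) → Matrix n n ℝ) (H : (n → ℝ) → ℝ) (x : n → ℝ) : n → ℝ :=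
  (P x).mulVec fun j => fderiv ℝ H x (Pi.single j 1)

lemma gradH (N : ℕ) (x : Fin N × Fin 3 → ℝ) (j : Fin N × Fin 3) :
    fderiv ℝ (fun y : Fin N × Fin 3 → ℝ => ∑ k : Fin N, (y (k, 0) + y (k, 1) + y (k, 2))) x
      (Pi.single j 1) = 1 := by
  have hfun : (fun y : Fin N × Fin 3 → ℝ => ∑ k : Fin N, (y (k, 0) + y (k, 1) + y (k, 2)))
      = fun y => (∑ p : Fin N × Fin 3, (ContinuousLinearMap.proj p :
        (Fin N × Fin 3 → ℝ) →L[ℝ] ℝ)) y := by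
    funext y
    simp [ContinuousLinearMap.sum_apply, Fintype.sum_prod_type, Fin.sum_univ_three]
  rw [hfun, ContinuousLinearMap.fderiv, ContinuousLinearMap.sum_apply]
  simp [Pi.single_apply, Finset.sum_ite_eq']

lemma hamVF_eq (N : ℕ) (α β : Fin N → ℝ) (φ₁ φ₂ : Fin N → ℝ × ℝ → ℝ)
    (τ : Fin N → Fin N → ℝ × ℝ × ℝ × ℝ → ℝ) (x : Fin N × Fin 3 → ℝ) (i : Fin N × Fin 3) :
    hamVF (intSirPoisson N α β φ₁ φ₂ τ)
        (fun y => ∑ k : Fin N, (y (k, 0) + y (k, 1) + y (k, 2))) x i =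
      ∑ j : Fin N × Fin 3, intSirPoisson N α β φ₁ φ₂ τ x i j := by
  simp only [hamVF, Matrix.mulVec, dotProduct, gradH, mul_one]

/-- With the total population Hamiltonian `H = ∑ₖ (S_k + I_k + R_k)`, the Hamiltonian vector
field of the interacting SIR Poisson structure is the interacting generalized SIR vector
field. -/
theorem interactingSIR_hamiltonian (N : ℕ) (hN : 1 ≤ N) (α β : Fin N → ℝ)
    (φ₁ φ₂ : Fin N → ℝ × ℝ → ℝ) (τ : Fin N → Fin N → ℝ × ℝ × ℝ × ℝ → ℝ) :
    ∀ x : Fin N × Fin 3 → ℝ, ∀ a : Fin N,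
      hamVF (intSirPoisson N α β φ₁ φ₂ τ)
          (fun y => ∑ k : Fin N, (y (k, 0) + y (k, 1) + y (k, 2))) x (a, 0) =
        -β a * x (a, 0) * x (a, 1) + φ₁ a (x (a, 0), x (a, 1)) ∧
      hamVF (intSirPoisson N α β φ₁ φ₂ τ)
          (fun y => ∑ k : Fin N, (y (k, 0) + y (k, 1) + y (k, 2))) x (a, 1) =
        β a * x (a, 0) * x (a, 1) - α a * x (a, 1) + φ₂ a (x (a, 0), x (a, 1)) ∧
      hamVF (intSirPoisson N α β φ₁ φ₂ τ)
          (fun y => ∑ k : Fin N, (y (k, 0) + y (k, 1) + y (k, 2))) x (a, 2) =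
        α a * x (a, 1) - φ₁ a (x (a, 0), x (a, 1)) - φ₂ a (x (a, 0), x (a, 1)) -
          ∑ k ∈ Finset.univ.erase a, τ a k (x (a, 0), x (a, 1), x (k, 0), x (k, 1)) := by
  intro x a
  refine ⟨?_, ?_, ?_⟩
  · rw [hamVF_eq]
    rw [Fintype.sum_prod_type]
    rw [Finset.sum_eq_single a]
    · simp [intSirPoisson, Fin.sum_univ_three]
    · intro b _ hb
      simp [intSirPoisson, Fin.sum_univ_three, (Ne.symm hb : ¬ a = b)]
    · simp
  · rw [hamVF_eq]
    rw [Fintype.sum_prod_type]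
    rw [Finset.sum_eq_single a]
    · simp [intSirPoisson, Fin.sum_univ_three]
      ring
    · intro b _ hb
      simp [intSirPoisson, Fin.sum_univ_three, (Ne.symm hb : ¬ a = b)]
    · simp
  · rw [hamVF_eq]
    rw [Fintype.sum_prod_type]
    rw [← Finset.add_sum_erase _ _ (Finset.mem_univ a)]
    have h1 : ∑ t : Fin 3, intSirPoisson N α β φ₁ φ₂ τ x (a, 2) (a, t) =
        α a * x (a, 1) - φ₁ a (x (a, 0), x (a, 1)) - φ₂ a (x (a, 0), x (a, 1)) := by
      simp [intSirPoisson, Fin.sum_univ_three]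
      ring
    have h2 : ∀ b ∈ Finset.univ.erase a,
        ∑ t : Fin 3, intSirPoisson N α β φ₁ φ₂ τ x (a, 2) (b, t) =
        -τ a b (x (a, 0), x (a, 1), x (b, 0), x (b, 1)) := by
      intro b hb
      have hab : ¬ a = b := fun h => (Finset.mem_erase.mp hb).1 h.symm
      simp [intSirPoisson, Fin.sum_univ_three, hab]
    rw [h1, Finset.sum_congr rfl h2]
    rw [Finset.sum_neg_distrib]
    ring
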